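/- The Grothendieck group of the category LRF of labeled rooted forests, defined as the free abelian group on isomorphism classes modulo the relation [L] = [M] + [N] for every short exact sequence ∅ → M → L → N → ∅, is isomorphic to Z, generated by the class of the one-vertex tree. -/

import Mathlib

attribute [local instance] Classical.propDecidable

noncomputable section

/-- A labeled rooted forest: a finite set of vertex labels together with a
parent function (`none` = root), acyclic via a depth function. -/
structure Forest where
  verts : Finset ℕ
  parent : ℕ → Option ℕ
  parent_mem : ∀ v ∈ verts, ∀ p, parent v = some p → p ∈ verts
  wf : ∃ d : ℕ → ℕ, ∀ v ∈ verts, ∀ p, parent v = some p → d p < d v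

namespace Forest

/-- `S` is the vertex set of a subforest of `F` (the branches `P_C(F)` severed by an
admissible cut `C`): a subset of the vertices closed under passing to children. -/
def IsSub (F : Forest) (S : Finset ℕ) : Prop :=
  S ⊆ F.verts ∧ ∀ v ∈ S, ∀ w ∈ F.verts, F.parent w = some v → w ∈ S

/-- The subforest `P_C(F)` determined by the (descendant-closed) vertex set `S`. -/
def restrict (F : Forest) (S : Finset ℕ) : Forest where
  verts := S ∩ F.verts
  parent v := (F.parent v).bind fun p =>
    if v ∈ S ∩ F.verts ∧ p ∈ S ∩ F.verts then some p else none
  parent_mem := by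
    intro v hv p hp
    beta_reduce at hp
    cases h : F.parent v with
    | none => rw [h] at hp; simp at hp
    | some q =>
      rw [h] at hp
      simp only [Option.bind_some] at hp
      split at hp
      · rename_i hc; cases hp; exact hc.2
      · simp at hp
  wf := by
    obtain ⟨d, hd⟩ := F.wf
    refine ⟨d, ?_⟩
    intro v hv p hp
    beta_reduce at hp
    cases h : F.parent v with
    | none => rw [h] at hp; simp at hp
    | some q =>
      rw [h] at hp
      simp only [Option.bind_some] at hp
      split at hp
      · rename_i hc; cases hp
        exact hd v (Finset.mem_inter.mp hv).2 _ h
      · simp at hp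

/-- The root part `R_C(F) = F/P_C(F)` determined by the severed vertex set `S`. -/
def quot (F : Forest) (S : Finset ℕ) : Forest where
  verts := F.verts \ S
  parent v := (F.parent v).bind fun p =>
    if v ∈ F.verts \ S ∧ p ∈ F.verts \ S then some p else none
  parent_mem := by
    intro v hv p hp
    beta_reduce at hp
    cases h : F.parent v with
    | none => rw [h] at hp; simp at hp
    | some q =>
      rw [h] at hp
      simp only [Option.bind_some] at hp
      split at hp
      · rename_i hc; cases hp; exact hc.2
      · simp at hp
  wf := by
    obtain ⟨d, hd⟩ := F.wf
    refine ⟨d, ?_⟩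
    intro v hv p hp
    beta_reduce at hp
    cases h : F.parent v with
    | none => rw [h] at hp; simp at hp
    | some q =>
      rw [h] at hp
      simp only [Option.bind_some] at hp
      split at hp
      · rename_i hc; cases hp
        exact hd v (Finset.mem_sdiff.mp hv).1 _ h
      · simp at hp

/-- `φ` realizes an isomorphism of labeled rooted forests (a root- and
incidence-preserving bijection on labels). -/
def IsoMap (F G : Forest) (φ : ℕ → ℕ) : Prop :=
  Set.BijOn φ (F.verts : Set ℕ) (G.verts : Set ℕ) ∧
    ∀ v ∈ F.verts, (F.parent v).map φ = G.parent (φ v)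

/-- Isomorphism of labeled rooted forests. -/
def Iso (F G : Forest) : Prop := ∃ φ, IsoMap F G φ

/-- A function on forests which only depends on the isomorphism class. -/
def Invariant (f : Forest → ℚ) : Prop := ∀ F G, Iso F G → f F = f G

/-- A function on forests supported on finitely many isomorphism classes. -/
def FinSupp (f : Forest → ℚ) : Prop :=
  ∃ s : Finset Forest, ∀ F, f F ≠ 0 → ∃ G ∈ s, Iso F G

/-- The Ringel-Hall convolution product:
`(f × g)(F) = ∑_{G ⊆ F} f(G) · g(F/G)`, the sum running over subforests of `F`. -/
def conv (f g : Forest → ℚ) : Forest → ℚ := fun F =>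
  ∑ S ∈ F.verts.powerset, if F.IsSub S then f (F.restrict S) * g (F.quot S) else 0

end Forest

end

namespace Forest

/-- A (raw) morphism datum in the category `LRF`: a triple `(C₁, C₂, f)`. -/
structure Mor where
  cut1 : Finset ℕ
  cut2 : Finset ℕ
  map : ℕ → ℕ

/-- `(C₁, C₂, f)` is a morphism `F → G` in `LRF`: `C₁` is an admissible cut of `F`
(recorded by the severed vertex set), `C₂` one of `G`, and `f` an isomorphism
`R_{C₁}(F) ≅ P_{C₂}(G)`. -/
def IsMor (F G : Forest) (m : Mor) : Prop :=
  F.IsSub m.cut1 ∧ G.IsSub m.cut2 ∧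
    IsoMap (F.quot m.cut1) (G.restrict m.cut2) m.map

/-- Composition of morphisms in `LRF` (`m : F → F₂` followed by `n : F₂ → F₃`):
the cut of `n` is pulled back through `m` to a cut `E₁ ≥ C₁` of `F`, and the new
image is the image of `R_{E₁}(F)` under the composite map. -/
noncomputable def Mor.comp (F : Forest) (m n : Mor) : Mor :=
  ⟨m.cut1 ∪ ((F.quot m.cut1).verts.filter fun v => m.map v ∈ n.cut1),
   ((F.quot (m.cut1 ∪ ((F.quot m.cut1).verts.filter fun v => m.map v ∈ n.cut1))).verts).image
     (n.map ∘ m.map),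
   n.map ∘ m.map⟩

/-- The identity morphism `(C_null, C_full, id)` of `F`. -/
def idMor (F : Forest) : Mor := ⟨∅, F.verts, id⟩

/-- Equality of morphisms out of `F` (the map only matters on `R_{C₁}(F)`). -/
def MorEq (F : Forest) (m n : Mor) : Prop :=
  m.cut1 = n.cut1 ∧ m.cut2 = n.cut2 ∧
    ∀ v ∈ (F.quot m.cut1).verts, m.map v = n.map v

/-- The zero morphisms `F → G`: morphisms with empty image (factoring through `∅`). -/
def IsZeroMor (F G : Forest) (m : Mor) : Prop := IsMor F G m ∧ m.cut2 = ∅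

end Forest

namespace Forest

/-- `i : A → L` is a kernel of `p : L → B` in `LRF`. -/
def IsKernelOf (A L B : Forest) (i p : Mor) : Prop :=
  IsZeroMor A B (Mor.comp A i p) ∧
    ∀ (A' : Forest) (u : Mor), IsMor A' L u → IsZeroMor A' B (Mor.comp A' u p) →
      ∃ w : Mor, IsMor A' A w ∧ MorEq A' (Mor.comp A' w i) u ∧
        ∀ w' : Mor, IsMor A' A w' → MorEq A' (Mor.comp A' w' i) u → MorEq A' w w'

/-- `p : L → B` is a cokernel of `i : A → L` in `LRF`. -/
def IsCokernelOf (A L B : Forest) (i p : Mor) : Prop :=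
  IsZeroMor A B (Mor.comp A i p) ∧
    ∀ (B' : Forest) (u : Mor), IsMor L B' u → IsZeroMor A B' (Mor.comp A i u) →
      ∃ w : Mor, IsMor B B' w ∧ MorEq L (Mor.comp L p w) u ∧
        ∀ w' : Mor, IsMor B B' w' → MorEq L (Mor.comp L p w') u → MorEq B w w'

/-- `∅ → A → L → B → ∅` is a short exact sequence in `LRF`. -/
def IsShortExact (A L B : Forest) (i p : Mor) : Prop :=
  IsMor A L i ∧ IsMor L B p ∧ IsKernelOf A L B i p ∧ IsCokernelOf A L B i p

end Forest

namespace Forest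

/-- The one-vertex rooted tree. -/
def oneVertexTree : Forest :=
  ⟨{0}, fun _ => none, by simp, ⟨id, by simp⟩⟩

/-- The relations defining the Grothendieck group of `LRF`: `[L] - [M] - [N]`
for each short exact sequence `∅ → M → L → N → ∅`, together with `[M] - [N]` for
isomorphic `M ≅ N` (so that the generators are isomorphism classes). -/
def grothendieckRelations : Set (FreeAbelianGroup Forest) :=
  {x | ∃ (M L N : Forest) (i p : Mor), IsShortExact M L N i p ∧
      x = FreeAbelianGroup.of L - FreeAbelianGroup.of M - FreeAbelianGroup.of N} ∪
    {x | ∃ M N : Forest, Iso M N ∧ x = FreeAbelianGroup.of M - FreeAbelianGroup.of N}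

/-- The Grothendieck group `K(LRF)`. -/
def K0 : Type :=
  FreeAbelianGroup Forest ⧸ AddSubgroup.closure grothendieckRelations

noncomputable instance : AddCommGroup K0 :=
  QuotientAddGroup.Quotient.addCommGroup (AddSubgroup.closure grothendieckRelations)

end Forest


namespace Forest

/-! ### Auxiliary lemmas -/

lemma isSub_subset {F : Forest} {S : Finset ℕ} (h : F.IsSub S) : S ⊆ F.verts := h.1

lemma isSub_full (F : Forest) : F.IsSub F.verts :=
  ⟨subset_rfl, fun _ _ w hw _ => hw⟩

lemma isSub_empty (F : Forest) : F.IsSub ∅ :=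
  ⟨Finset.empty_subset _, by simp⟩

@[simp] lemma restrict_verts (F : Forest) (S : Finset ℕ) :
    (F.restrict S).verts = S ∩ F.verts := rfl

@[simp] lemma quot_verts (F : Forest) (S : Finset ℕ) :
    (F.quot S).verts = F.verts \ S := rfl

lemma restrict_parent (F : Forest) (S : Finset ℕ) (v : ℕ) :
    (F.restrict S).parent v = (F.parent v).bind
      (fun p => if v ∈ S ∩ F.verts ∧ p ∈ S ∩ F.verts then some p else none) := rfl

lemma quot_parent (F : Forest) (S : Finset ℕ) (v : ℕ) :
    (F.quot S).parent v = (F.parent v).bind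
      (fun p => if v ∈ F.verts \ S ∧ p ∈ F.verts \ S then some p else none) := rfl

/-- Two forests with the same vertices and same parent function on vertices. -/
def Same (F G : Forest) : Prop :=
  F.verts = G.verts ∧ ∀ v ∈ F.verts, F.parent v = G.parent v

lemma Same.symm {F G : Forest} (h : Same F G) : Same G F :=
  ⟨h.1.symm, fun v hv => (h.2 v (h.1 ▸ hv)).symm⟩

lemma Same.isoMap_id {F G : Forest} (h : Same F G) : IsoMap F G id := by
  refine ⟨?_, ?_⟩
  · rw [h.1]; exact Set.bijOn_id _
  · intro v hv
    simp only [Option.map_id, id_eq]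
    exact h.2 v hv

lemma IsoMap.congr_left {F F' G : Forest} {φ : ℕ → ℕ} (h : Same F F')
    (hm : IsoMap F G φ) : IsoMap F' G φ := by
  refine ⟨?_, ?_⟩
  · have : (F'.verts : Set ℕ) = (F.verts : Set ℕ) := by rw [h.1]
    rw [this]; exact hm.1
  · intro v hv
    rw [← h.2 v (h.1 ▸ hv)]
    exact hm.2 v (h.1 ▸ hv)

lemma IsoMap.congr_right {F G G' : Forest} {φ : ℕ → ℕ} (h : Same G G')
    (hm : IsoMap F G φ) : IsoMap F G' φ := by
  refine ⟨?_, ?_⟩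
  · have : (G'.verts : Set ℕ) = (G.verts : Set ℕ) := by rw [h.1]
    rw [this]; exact hm.1
  · intro v hv
    rw [← h.2 (φ v) (hm.1.mapsTo hv)]
    exact hm.2 v hv

lemma same_quot_empty (F : Forest) : Same (F.quot ∅) F := by
  refine ⟨by simp, ?_⟩
  intro v hv
  simp only [quot_verts, Finset.sdiff_empty] at hv
  rw [quot_parent]
  cases h : F.parent v with
  | none => rfl
  | some q =>
    have hq : q ∈ F.verts := F.parent_mem v hv q h
    simp [hv, hq]

lemma same_restrict_full (F : Forest) : Same (F.restrict F.verts) F := by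
  refine ⟨by simp, ?_⟩
  intro v hv
  simp only [restrict_verts, Finset.inter_self] at hv
  rw [restrict_parent]
  cases h : F.parent v with
  | none => rfl
  | some q =>
    have hq : q ∈ F.verts := F.parent_mem v hv q h
    simp [hv, hq]

lemma same_restrict_restrict {F : Forest} {S T : Finset ℕ} (hT : T ⊆ S) :
    Same ((F.restrict S).restrict T) (F.restrict T) := by
  have hverts : T ∩ (S ∩ F.verts) = T ∩ F.verts := by
    ext x; simp only [Finset.mem_inter]
    exact ⟨fun ⟨h1, _, h3⟩ => ⟨h1, h3⟩, fun ⟨h1, h2⟩ => ⟨h1, hT h1, h2⟩⟩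
  refine ⟨by simp only [restrict_verts]; exact hverts, ?_⟩
  intro v hv
  simp only [restrict_verts, hverts, Finset.mem_inter] at hv
  rw [restrict_parent, restrict_parent, restrict_parent]
  cases h : F.parent v with
  | none => rfl
  | some q =>
    simp only [Option.bind_some, restrict_verts, hverts, Finset.mem_inter]
    have hvT : v ∈ T := hv.1
    have hvF : v ∈ F.verts := hv.2
    have hvS : v ∈ S := hT hvT
    by_cases hqF : q ∈ F.verts
    · by_cases hqT : q ∈ T
      · simp [hvT, hvF, hvS, hqF, hqT, hT hqT]
      · by_cases hqS : q ∈ S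
        · simp [hvT, hvF, hvS, hqF, hqT, hqS]
        · simp [hvT, hvF, hvS, hqF, hqT, hqS]
    · simp [hqF]

lemma same_quot_quot {F : Forest} {S T : Finset ℕ} (hST : S ⊆ T) :
    Same ((F.quot S).quot (T \ S)) (F.quot T) := by
  have hverts : (F.verts \ S) \ (T \ S) = F.verts \ T := by
    ext x
    simp only [Finset.mem_sdiff, not_and, not_not]
    constructor
    · rintro ⟨⟨hx, hxs⟩, h2⟩
      refine ⟨hx, fun hxt => hxs (h2 hxt)⟩
    · rintro ⟨hx, hxt⟩
      exact ⟨⟨hx, fun hs => hxt (hST hs)⟩, fun ht => absurd ht hxt⟩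
  refine ⟨by simp only [quot_verts]; exact hverts, ?_⟩
  intro v hv
  simp only [quot_verts, hverts, Finset.mem_sdiff] at hv
  rw [quot_parent, quot_parent, quot_parent]
  cases h : F.parent v with
  | none => rfl
  | some q =>
    simp only [Option.bind_some, quot_verts, hverts, Finset.mem_sdiff]
    have hvF : v ∈ F.verts := hv.1
    have hvT : v ∉ T := hv.2
    have hvS : v ∉ S := fun hs => hvT (hST hs)
    by_cases hqF : q ∈ F.verts
    · by_cases hqS : q ∈ S
      · have hqT : q ∈ T := hST hqS
        simp [hvF, hvT, hvS, hqF, hqS, hqT]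
      · by_cases hqT : q ∈ T
        · simp [hvF, hvT, hvS, hqF, hqS, hqT]
        · simp [hvF, hvT, hvS, hqF, hqS, hqT]
    · simp [hqF]

lemma IsoMap.card_eq {F G : Forest} {φ : ℕ → ℕ} (h : IsoMap F G φ) :
    F.verts.card = G.verts.card := by
  have himg : F.verts.image φ = G.verts := by
    apply Finset.coe_injective
    rw [Finset.coe_image, h.1.image_eq]
  rw [← himg, Finset.card_image_of_injOn h.1.injOn]

lemma IsMor.cut2_verts {F G : Forest} {m : Mor} (h : IsMor F G m) :
    (G.restrict m.cut2).verts = m.cut2 := by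
  simp only [restrict_verts]
  exact Finset.inter_eq_left.mpr h.2.1.1

lemma IsMor.image_eq {F G : Forest} {m : Mor} (h : IsMor F G m) :
    (F.verts \ m.cut1).image m.map = m.cut2 := by
  apply Finset.coe_injective
  rw [Finset.coe_image]
  have : (F.verts \ m.cut1 : Finset ℕ) = (F.quot m.cut1).verts := rfl
  rw [this, h.2.2.1.image_eq, h.cut2_verts]

lemma IsMor.mapsTo {F G : Forest} {m : Mor} (h : IsMor F G m) :
    ∀ v ∈ F.verts \ m.cut1, m.map v ∈ m.cut2 := by
  intro v hv
  rw [← h.image_eq]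
  exact Finset.mem_image_of_mem _ hv


lemma restrict_parent_some {F : Forest} {S : Finset ℕ} {v q : ℕ}
    (h : (F.restrict S).parent v = some q) : F.parent v = some q := by
  rw [restrict_parent] at h
  cases hp : F.parent v with
  | none => rw [hp] at h; simp at h
  | some r =>
    rw [hp] at h
    simp only [Option.bind_some] at h
    split at h
    · cases h; rfl
    · simp at h

lemma quot_parent_some {F : Forest} {S : Finset ℕ} {v q : ℕ}
    (h : (F.quot S).parent v = some q) : F.parent v = some q := by
  rw [quot_parent] at h
  cases hp : F.parent v with
  | none => rw [hp] at h; simp at h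
  | some r =>
    rw [hp] at h
    simp only [Option.bind_some] at h
    split at h
    · cases h; rfl
    · simp at h

lemma isoMap_empty {F G : Forest} (hF : F.verts = ∅) (hG : G.verts = ∅) (f : ℕ → ℕ) :
    IsoMap F G f := by
  constructor
  · rw [hF, hG]
    simp only [Finset.coe_empty]
    exact ⟨fun x hx => absurd hx (Set.notMem_empty x), fun x hx => absurd hx (Set.notMem_empty x),
      fun x hx => absurd hx (Set.notMem_empty x)⟩
  · intro v hv; rw [hF] at hv; simp at hv

lemma comp_cut1_def (F : Forest) (m n : Mor) : (Mor.comp F m n).cut1 =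
    m.cut1 ∪ ((F.quot m.cut1).verts.filter fun v => m.map v ∈ n.cut1) := rfl

lemma comp_cut2_def (F : Forest) (m n : Mor) : (Mor.comp F m n).cut2 =
    ((F.quot (Mor.comp F m n).cut1).verts).image (n.map ∘ m.map) := rfl

lemma comp_map_def (F : Forest) (m n : Mor) : (Mor.comp F m n).map = n.map ∘ m.map := rfl

lemma comp_cut1_subset {F : Forest} {m n : Mor} (hm : m.cut1 ⊆ F.verts) :
    (Mor.comp F m n).cut1 ⊆ F.verts := by
  rw [comp_cut1_def]
  intro x hx
  rcases Finset.mem_union.mp hx with h | h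
  · exact hm h
  · exact (Finset.mem_sdiff.mp (Finset.mem_of_mem_filter x h)).1

lemma comp_cut1_eq_verts {F : Forest} {m n : Mor} (hm : m.cut1 ⊆ F.verts)
    (h : ∀ v ∈ F.verts \ m.cut1, m.map v ∈ n.cut1) :
    (Mor.comp F m n).cut1 = F.verts := by
  apply Finset.Subset.antisymm (comp_cut1_subset hm)
  intro x hx
  rw [comp_cut1_def]
  by_cases hx1 : x ∈ m.cut1
  · exact Finset.mem_union_left _ hx1
  · refine Finset.mem_union_right _ (Finset.mem_filter.mpr ⟨?_, ?_⟩)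
    · exact Finset.mem_sdiff.mpr ⟨hx, hx1⟩
    · exact h x (Finset.mem_sdiff.mpr ⟨hx, hx1⟩)

lemma isZeroMor_comp {F G : Forest} {m n : Mor} (hm : m.cut1 ⊆ F.verts)
    (h : ∀ v ∈ F.verts \ m.cut1, m.map v ∈ n.cut1) : IsZeroMor F G (Mor.comp F m n) := by
  have hE := comp_cut1_eq_verts (n := n) hm h
  have hq : (F.quot (Mor.comp F m n).cut1).verts = ∅ := by
    rw [quot_verts, hE, Finset.sdiff_self]
  have hc2 : (Mor.comp F m n).cut2 = ∅ := by
    rw [comp_cut2_def, hq, Finset.image_empty]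
  refine ⟨⟨hE ▸ isSub_full F, hc2 ▸ isSub_empty G, ?_⟩, hc2⟩
  apply isoMap_empty hq
  rw [hc2, restrict_verts, Finset.empty_inter]

/-- The vertex set of the quotient by the composite cut is empty whenever the
composite is a zero morphism. -/
lemma verts_subset_of_zero {F : Forest} {m n : Mor}
    (h : (Mor.comp F m n).cut2 = ∅) : F.verts ⊆ (Mor.comp F m n).cut1 := by
  rw [comp_cut2_def] at h
  have h2 : F.verts \ (Mor.comp F m n).cut1 = ∅ := by
    have := Finset.image_eq_empty.mp h
    rwa [quot_verts] at this
  exact Finset.sdiff_eq_empty_iff_subset.mp h2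

lemma mem_cut2_elim {F G : Forest} {m : Mor} (h : IsMor F G m) {x : ℕ} (hx : x ∈ m.cut2) :
    ∃ v ∈ F.verts \ m.cut1, m.map v = x := by
  rw [← h.image_eq] at hx
  obtain ⟨v, hv, hvx⟩ := Finset.mem_image.mp hx
  exact ⟨v, hv, hvx⟩

theorem isShortExact_of_cut {F : Forest} {S : Finset ℕ} (hS : F.IsSub S) :
    IsShortExact (F.restrict S) F (F.quot S) ⟨∅, S, id⟩ ⟨S, F.verts \ S, id⟩ := by
  set A := F.restrict S with hA
  set B := F.quot S with hB
  have hAverts : A.verts = S ∩ F.verts := rfl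
  have hAS : A.verts = S := by rw [hAverts, Finset.inter_eq_left.mpr hS.1]
  have hBverts : B.verts = F.verts \ S := rfl
  have hmi : IsMor A F (⟨∅, S, id⟩ : Mor) :=
    ⟨isSub_empty A, hS, (same_quot_empty A).isoMap_id⟩
  have hmp : IsMor F B (⟨S, F.verts \ S, id⟩ : Mor) :=
    ⟨hS, isSub_full B, ((same_restrict_full B).symm).isoMap_id⟩
  have hzero : IsZeroMor A B (Mor.comp A ⟨∅, S, id⟩ ⟨S, F.verts \ S, id⟩) := by
    apply isZeroMor_comp (by simp)
    intro v hv
    simp only [Finset.sdiff_empty] at hv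
    rw [hAS] at hv
    exact hv
  refine ⟨hmi, hmp, ⟨hzero, ?_⟩, ⟨hzero, ?_⟩⟩
  · -- kernel universal property
    intro A' u hu hz
    -- u.cut2 ⊆ S
    have hsub := verts_subset_of_zero hz.2
    have hu2S : u.cut2 ⊆ S := by
      intro x hx
      obtain ⟨v, hv, hvx⟩ := mem_cut2_elim hu hx
      have hvE := hsub (Finset.mem_sdiff.mp hv).1
      rw [comp_cut1_def] at hvE
      rcases Finset.mem_union.mp hvE with h1 | h1
      · exact absurd h1 (Finset.mem_sdiff.mp hv).2
      · have := (Finset.mem_filter.mp h1).2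
        rw [hvx] at this
        exact this
    refine ⟨⟨u.cut1, u.cut2, u.map⟩, ⟨hu.1, ?_, ?_⟩, ?_, ?_⟩
    · -- A.IsSub u.cut2
      constructor
      · intro x hx
        rw [hAverts]
        exact Finset.mem_inter.mpr ⟨hu2S hx, hu.2.1.1 hx⟩
      · intro v hv x hx hpar
        rw [hAverts, Finset.mem_inter] at hx
        exact hu.2.1.2 v hv x hx.2 (restrict_parent_some hpar)
    · -- IsoMap
      exact hu.2.2.congr_right (same_restrict_restrict hu2S).symm
    · -- MorEq (comp w i) u
      have hfilt : ((A'.quot u.cut1).verts.filter fun v => u.map v ∈ (∅ : Finset ℕ)) = ∅ :=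
        Finset.filter_eq_empty_iff.mpr (fun _ _ => by simp)
      have hcut1 : (Mor.comp A' ⟨u.cut1, u.cut2, u.map⟩ ⟨∅, S, id⟩).cut1 = u.cut1 := by
        rw [comp_cut1_def]
        simp only
        rw [hfilt, Finset.union_empty]
      refine ⟨hcut1, ?_, fun v _ => rfl⟩
      rw [comp_cut2_def, hcut1]
      have : (id ∘ u.map) = u.map := Function.id_comp u.map
      simp only [this]
      exact hu.image_eq
    · -- uniqueness
      intro w' hw' hmeq
      have hfilt : ((A'.quot w'.cut1).verts.filter fun v => w'.map v ∈ (∅ : Finset ℕ)) = ∅ :=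
        Finset.filter_eq_empty_iff.mpr (fun _ _ => by simp)
      have hcut1 : (Mor.comp A' w' ⟨∅, S, id⟩).cut1 = w'.cut1 := by
        rw [comp_cut1_def]
        simp only
        rw [hfilt, Finset.union_empty]
      have h1 : w'.cut1 = u.cut1 := by rw [← hcut1]; exact hmeq.1
      have h2 : w'.cut2 = u.cut2 := by
        have := hmeq.2.1
        rw [comp_cut2_def, hcut1] at this
        rw [← this]
        have hid : (id ∘ w'.map) = w'.map := Function.id_comp w'.map
        simp only [hid]
        exact hw'.image_eq.symm
      refine ⟨h1.symm, h2.symm, ?_⟩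
      intro v hv
      have hv' : v ∈ (A'.quot (Mor.comp A' w' ⟨∅, S, id⟩).cut1).verts := by
        rw [hcut1, h1]; exact hv
      have := hmeq.2.2 v hv'
      exact this.symm
  · -- cokernel universal property
    intro B' u hu hz
    have hsub := verts_subset_of_zero hz.2
    have hSu : S ⊆ u.cut1 := by
      intro s hs
      have hsA : s ∈ A.verts := by rw [hAS]; exact hs
      have hsE := hsub hsA
      rw [comp_cut1_def] at hsE
      rcases Finset.mem_union.mp hsE with h1 | h1
      · exact absurd h1 (Finset.notMem_empty s)
      · exact (Finset.mem_filter.mp h1).2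
    have hqq : Same ((F.quot S).quot (u.cut1 \ S)) (F.quot u.cut1) := same_quot_quot hSu
    refine ⟨⟨u.cut1 \ S, u.cut2, u.map⟩, ⟨?_, hu.2.1, ?_⟩, ?_, ?_⟩
    · -- B.IsSub (u.cut1 \ S)
      constructor
      · intro x hx
        rw [hBverts, Finset.mem_sdiff]
        exact ⟨hu.1.1 (Finset.mem_sdiff.mp hx).1, (Finset.mem_sdiff.mp hx).2⟩
      · intro v hv x hx hpar
        rw [hBverts, Finset.mem_sdiff] at hx
        refine Finset.mem_sdiff.mpr ⟨?_, hx.2⟩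
        exact hu.1.2 v (Finset.mem_sdiff.mp hv).1 x hx.1 (quot_parent_some hpar)
    · -- IsoMap
      exact hu.2.2.congr_left hqq.symm
    · -- MorEq (comp p w) u
      have hcut1 : (Mor.comp F ⟨S, F.verts \ S, id⟩ ⟨u.cut1 \ S, u.cut2, u.map⟩).cut1
          = u.cut1 := by
        rw [comp_cut1_def]
        simp only
        apply Finset.Subset.antisymm
        · intro x hx
          rcases Finset.mem_union.mp hx with h1 | h1
          · exact hSu h1
          · exact (Finset.mem_sdiff.mp (Finset.mem_filter.mp h1).2).1
        · intro x hx
          by_cases hxS : x ∈ S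
          · exact Finset.mem_union_left _ hxS
          · refine Finset.mem_union_right _ (Finset.mem_filter.mpr ⟨?_, ?_⟩)
            · exact Finset.mem_sdiff.mpr ⟨hu.1.1 hx, hxS⟩
            · exact Finset.mem_sdiff.mpr ⟨hx, hxS⟩
      refine ⟨hcut1, ?_, fun v _ => rfl⟩
      rw [comp_cut2_def, hcut1]
      have hid : (u.map ∘ id) = u.map := Function.comp_id u.map
      simp only [hid]
      exact hu.image_eq
    · -- uniqueness
      intro w' hw' hmeq
      have hw'sub : w'.cut1 ⊆ F.verts \ S := hw'.1.1
      have hcut1 : (Mor.comp F ⟨S, F.verts \ S, id⟩ w').cut1 = S ∪ w'.cut1 := by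
        rw [comp_cut1_def]
        simp only
        congr 1
        apply Finset.Subset.antisymm
        · intro x hx; exact (Finset.mem_filter.mp hx).2
        · intro x hx
          exact Finset.mem_filter.mpr ⟨hw'sub hx, hx⟩
      have hE : S ∪ w'.cut1 = u.cut1 := by rw [← hcut1]; exact hmeq.1
      have h1 : w'.cut1 = u.cut1 \ S := by
        apply Finset.Subset.antisymm
        · intro x hx
          refine Finset.mem_sdiff.mpr ⟨hE ▸ Finset.mem_union_right _ hx, ?_⟩
          exact (Finset.mem_sdiff.mp (hw'sub hx)).2
        · intro x hx
          obtain ⟨hx1, hx2⟩ := Finset.mem_sdiff.mp hx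
          rcases Finset.mem_union.mp (hE ▸ hx1 : x ∈ S ∪ w'.cut1) with h | h
          · exact absurd h hx2
          · exact h
      have hBq : (B.quot w'.cut1).verts = (F.quot u.cut1).verts := by
        rw [h1]; exact hqq.1
      have h2 : w'.cut2 = u.cut2 := by
        have hthis := hmeq.2.1
        rw [comp_cut2_def, hcut1, hE] at hthis
        have hid : (w'.map ∘ id) = w'.map := Function.comp_id w'.map
        rw [hid] at hthis
        have hsets : (F.quot u.cut1).verts = B.verts \ w'.cut1 := by
          rw [← quot_verts]
          exact hBq.symm
        rw [hsets] at hthis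
        rw [← hthis]
        exact hw'.image_eq.symm
      refine ⟨h1.symm, h2.symm, ?_⟩
      intro v hv
      have hv' : v ∈ (F.quot (Mor.comp F ⟨S, F.verts \ S, id⟩ w').cut1).verts := by
        rw [hcut1, hE, ← hBq, h1] at *
        exact hv
      exact (hmeq.2.2 v hv').symm

lemma comp_cut2_eq_empty {F : Forest} {m n : Mor} (h : (Mor.comp F m n).cut1 = F.verts) :
    (Mor.comp F m n).cut2 = ∅ := by
  rw [comp_cut2_def, quot_verts, h, Finset.sdiff_self, Finset.image_empty]

lemma morEq_of_full {F : Forest} {m u : Mor} (hm1 : m.cut1 = F.verts) (hm2 : m.cut2 = ∅)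
    (hu1 : u.cut1 = F.verts) (hu2 : u.cut2 = ∅) : MorEq F m u := by
  refine ⟨hm1.trans hu1.symm, hm2.trans hu2.symm, ?_⟩
  intro v hv
  rw [quot_verts, hm1, Finset.sdiff_self] at hv
  simp at hv

/-- For a short exact sequence, `i` is injective: `i.cut1 = ∅`. -/
lemma ses_cut1_empty {A L B : Forest} {i p : Mor} (h : IsShortExact A L B i p) :
    i.cut1 = ∅ := by
  obtain ⟨hi, hp, hker, hcoker⟩ := h
  set A' := A.restrict i.cut1 with hA'
  have hA'verts : A'.verts = i.cut1 := by
    rw [hA', restrict_verts, Finset.inter_eq_left.mpr hi.1.1]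
  set u : Mor := ⟨A'.verts, ∅, id⟩ with hudef
  have hu : IsMor A' L u := by
    refine ⟨isSub_full A', isSub_empty L, isoMap_empty ?_ ?_ id⟩
    · rw [quot_verts, Finset.sdiff_self]
    · rw [restrict_verts, Finset.empty_inter]
  have hz : IsZeroMor A' B (Mor.comp A' u p) := by
    apply isZeroMor_comp subset_rfl
    intro v hv
    rw [Finset.sdiff_self] at hv
    exact absurd hv (Finset.notMem_empty v)
  obtain ⟨w, hw, hweq, huniq⟩ := hker.2 A' u hu hz
  have hw1 : IsMor A' A (⟨A'.verts, ∅, id⟩ : Mor) := by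
    refine ⟨isSub_full A', isSub_empty A, isoMap_empty ?_ ?_ id⟩
    · rw [quot_verts, Finset.sdiff_self]
    · rw [restrict_verts, Finset.empty_inter]
  have hcomp1 : (Mor.comp A' (⟨A'.verts, ∅, id⟩ : Mor) i).cut1 = A'.verts := by
    apply comp_cut1_eq_verts subset_rfl
    intro v hv
    rw [Finset.sdiff_self] at hv
    exact absurd hv (Finset.notMem_empty v)
  have hmeq1 : MorEq A' (Mor.comp A' (⟨A'.verts, ∅, id⟩ : Mor) i) u :=
    morEq_of_full hcomp1 (comp_cut2_eq_empty hcomp1) rfl rfl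
  have hw2 : IsMor A' A (⟨∅, i.cut1, id⟩ : Mor) :=
    ⟨isSub_empty A', hi.1, (same_quot_empty A').isoMap_id⟩
  have hcomp2 : (Mor.comp A' (⟨∅, i.cut1, id⟩ : Mor) i).cut1 = A'.verts := by
    apply comp_cut1_eq_verts (Finset.empty_subset _)
    intro v hv
    rw [Finset.sdiff_empty, hA'verts] at hv
    exact hv
  have hmeq2 : MorEq A' (Mor.comp A' (⟨∅, i.cut1, id⟩ : Mor) i) u :=
    morEq_of_full hcomp2 (comp_cut2_eq_empty hcomp2) rfl rfl
  have e1 : w.cut1 = A'.verts := (huniq _ hw1 hmeq1).1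
  have e2 : w.cut1 = ∅ := (huniq _ hw2 hmeq2).1
  rw [← hA'verts, ← e1]
  exact e2

/-- For a short exact sequence, `p` is surjective: `p.cut2 = B.verts`. -/
lemma ses_cut2_full {A L B : Forest} {i p : Mor} (h : IsShortExact A L B i p) :
    p.cut2 = B.verts := by
  obtain ⟨hi, hp, hker, hcoker⟩ := h
  set B' := B.quot p.cut2 with hB'
  set u : Mor := ⟨L.verts, ∅, id⟩ with hudef
  have hu : IsMor L B' u := by
    refine ⟨isSub_full L, isSub_empty B', isoMap_empty ?_ ?_ id⟩
    · rw [quot_verts, Finset.sdiff_self]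
    · rw [restrict_verts, Finset.empty_inter]
  have hz : IsZeroMor A B' (Mor.comp A i u) := by
    apply isZeroMor_comp hi.1.1
    intro v hv
    exact hi.2.1.1 (hi.mapsTo v hv)
  obtain ⟨w, hw, hweq, huniq⟩ := hcoker.2 B' u hu hz
  have hw1 : IsMor B B' (⟨B.verts, ∅, id⟩ : Mor) := by
    refine ⟨isSub_full B, isSub_empty B', isoMap_empty ?_ ?_ id⟩
    · rw [quot_verts, Finset.sdiff_self]
    · rw [restrict_verts, Finset.empty_inter]
  have hcomp1 : (Mor.comp L p (⟨B.verts, ∅, id⟩ : Mor)).cut1 = L.verts := by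
    apply comp_cut1_eq_verts hp.1.1
    intro v hv
    exact hp.2.1.1 (hp.mapsTo v hv)
  have hmeq1 : MorEq L (Mor.comp L p (⟨B.verts, ∅, id⟩ : Mor)) u :=
    morEq_of_full hcomp1 (comp_cut2_eq_empty hcomp1) rfl rfl
  have hw2 : IsMor B B' (⟨p.cut2, B'.verts, id⟩ : Mor) :=
    ⟨hp.2.1, isSub_full B', ((same_restrict_full B').symm).isoMap_id⟩
  have hcomp2 : (Mor.comp L p (⟨p.cut2, B'.verts, id⟩ : Mor)).cut1 = L.verts := by
    apply comp_cut1_eq_verts hp.1.1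
    intro v hv
    exact hp.mapsTo v hv
  have hmeq2 : MorEq L (Mor.comp L p (⟨p.cut2, B'.verts, id⟩ : Mor)) u :=
    morEq_of_full hcomp2 (comp_cut2_eq_empty hcomp2) rfl rfl
  have e1 : w.cut1 = B.verts := (huniq _ hw1 hmeq1).1
  have e2 : w.cut1 = p.cut2 := (huniq _ hw2 hmeq2).1
  rw [← e2]
  exact e1

/-- For a short exact sequence, exactness in the middle: `p.cut1 = i.cut2`. -/
lemma ses_exact {A L B : Forest} {i p : Mor} (h : IsShortExact A L B i p) :
    p.cut1 = i.cut2 := by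
  obtain ⟨hi, hp, hker, hcoker⟩ := h
  -- first inclusion: i.cut2 ⊆ p.cut1
  have hsub1 : i.cut2 ⊆ p.cut1 := by
    have hsub := verts_subset_of_zero hker.1.2
    intro x hx
    obtain ⟨v, hv, hvx⟩ := mem_cut2_elim hi hx
    have hvE := hsub (Finset.mem_sdiff.mp hv).1
    rw [comp_cut1_def] at hvE
    rcases Finset.mem_union.mp hvE with h1 | h1
    · exact absurd h1 (Finset.mem_sdiff.mp hv).2
    · have := (Finset.mem_filter.mp h1).2
      rw [hvx] at this
      exact this
  -- second inclusion: p.cut1 ⊆ i.cut2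
  have hsub2 : p.cut1 ⊆ i.cut2 := by
    set A' := L.restrict p.cut1 with hA'
    have hA'verts : A'.verts = p.cut1 := by
      rw [hA', restrict_verts, Finset.inter_eq_left.mpr hp.1.1]
    set u : Mor := ⟨∅, p.cut1, id⟩ with hudef
    have hu : IsMor A' L u := ⟨isSub_empty A', hp.1, (same_quot_empty A').isoMap_id⟩
    have hz : IsZeroMor A' B (Mor.comp A' u p) := by
      apply isZeroMor_comp (Finset.empty_subset _)
      intro v hv
      rw [Finset.sdiff_empty, hA'verts] at hv
      exact hv
    obtain ⟨w, hw, hweq, _⟩ := hker.2 A' u hu hz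
    have hc1 : w.cut1 ∪ ((A'.quot w.cut1).verts.filter fun v => w.map v ∈ i.cut1) = ∅ := by
      have := hweq.1
      rw [comp_cut1_def] at this
      exact this
    obtain ⟨hwc1, hfilt⟩ := Finset.union_eq_empty.mp hc1
    have hc2 := hweq.2.1
    rw [comp_cut2_def] at hc2
    have hcc1 : (Mor.comp A' w i).cut1 = ∅ := by rw [comp_cut1_def]; exact hc1
    rw [hcc1, quot_verts, Finset.sdiff_empty] at hc2
    intro x hx
    have hx' : x ∈ A'.verts.image (i.map ∘ w.map) := by rw [hc2]; exact hx
    obtain ⟨v, hv, hvx⟩ := Finset.mem_image.mp hx'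
    have hvq : v ∈ (A'.quot w.cut1).verts := by
      rw [quot_verts, hwc1, Finset.sdiff_empty]
      exact hv
    have hwv2 : w.map v ∈ w.cut2 := hw.mapsTo v (by rw [← quot_verts]; exact hvq)
    have hwvA : w.map v ∈ A.verts := hw.2.1.1 hwv2
    have hwvni : w.map v ∉ i.cut1 := by
      intro hcon
      exact (Finset.filter_eq_empty_iff.mp hfilt) hvq hcon
    have : i.map (w.map v) ∈ i.cut2 :=
      hi.mapsTo (w.map v) (Finset.mem_sdiff.mpr ⟨hwvA, hwvni⟩)
    rw [← hvx]
    exact this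
  exact Finset.Subset.antisymm hsub2 hsub1

/-- For any short exact sequence in `LRF`, cardinalities of vertex sets add up. -/
theorem card_of_shortExact {A L B : Forest} {i p : Mor}
    (h : IsShortExact A L B i p) :
    L.verts.card = A.verts.card + B.verts.card := by
  have h1 := ses_cut1_empty h
  have h2 := ses_cut2_full h
  have h3 := ses_exact h
  obtain ⟨hi, hp, _, _⟩ := h
  have hAcard : A.verts.card = i.cut2.card := by
    have := hi.2.2.1  -- BijOn
    have hcard := IsoMap.card_eq hi.2.2
    rw [quot_verts, h1, Finset.sdiff_empty] at hcard
    rw [hi.cut2_verts] at hcard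
    exact hcard
  have hBcard : (L.verts \ p.cut1).card = B.verts.card := by
    have hcard := IsoMap.card_eq hp.2.2
    rw [quot_verts] at hcard
    rw [hp.cut2_verts, h2] at hcard
    exact hcard
  have h3c : p.cut1.card = i.cut2.card := by rw [h3]
  have := Finset.card_sdiff_add_card_eq_card hp.1.1
  omega

end Forest

namespace Forest

/-- The quotient map as a group homomorphism. -/
noncomputable def k0mk : FreeAbelianGroup Forest →+ K0 :=
  QuotientAddGroup.mk' (AddSubgroup.closure grothendieckRelations)

lemma k0mk_apply (x : FreeAbelianGroup Forest) :
    k0mk x = (QuotientAddGroup.mk x : K0) := rfl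

lemma mk_relation {x : FreeAbelianGroup Forest} (hx : x ∈ grothendieckRelations) :
    k0mk x = 0 :=
  (QuotientAddGroup.eq_zero_iff x).mpr (AddSubgroup.subset_closure hx)

lemma mk_ses {M L N : Forest} {i p : Mor} (h : IsShortExact M L N i p) :
    k0mk (FreeAbelianGroup.of L) = k0mk (FreeAbelianGroup.of M) + k0mk (FreeAbelianGroup.of N) := by
  have h0 := mk_relation (Set.mem_union_left _ ⟨M, L, N, i, p, h, rfl⟩)
  rw [map_sub, map_sub, sub_sub, sub_eq_zero] at h0
  exact h0

lemma mk_iso {M N : Forest} (h : Iso M N) :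
    k0mk (FreeAbelianGroup.of M) = k0mk (FreeAbelianGroup.of N) := by
  have h0 := mk_relation (Set.mem_union_right _ ⟨M, N, h, rfl⟩)
  rw [map_sub, sub_eq_zero] at h0
  exact h0

lemma mk_restrict_empty (F : Forest) : k0mk (FreeAbelianGroup.of (F.restrict ∅)) = 0 := by
  have hses := mk_ses (isShortExact_of_cut (isSub_empty F))
  have hiso : k0mk (FreeAbelianGroup.of (F.quot ∅)) = k0mk (FreeAbelianGroup.of F) :=
    mk_iso ⟨id, (same_quot_empty F).isoMap_id⟩
  rw [hiso] at hses
  exact (right_eq_add.mp hses)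

lemma mk_eq_card (F : Forest) :
    k0mk (FreeAbelianGroup.of F) = F.verts.card • k0mk (FreeAbelianGroup.of oneVertexTree) := by
  generalize hn : F.verts.card = n
  induction n using Nat.strong_induction_on generalizing F with
  | _ n ih =>
    rcases Nat.eq_zero_or_pos n with h0 | hpos
    · subst h0
      have hemp : F.verts = ∅ := Finset.card_eq_zero.mp hn
      have hiso : Iso F (F.restrict ∅) :=
        ⟨id, isoMap_empty hemp (by rw [restrict_verts, Finset.empty_inter]) id⟩
      rw [mk_iso hiso, mk_restrict_empty, zero_smul]
    · have hne : F.verts.Nonempty := by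
        rw [← Finset.card_pos, hn]; exact hpos
      obtain ⟨d, hd⟩ := F.wf
      obtain ⟨v, hv, hmax⟩ := F.verts.exists_max_image d hne
      have hSsub : F.IsSub {v} := by
        refine ⟨Finset.singleton_subset_iff.mpr hv, ?_⟩
        intro x hx w hw hpar
        have hxv : x = v := Finset.mem_singleton.mp hx
        subst hxv
        have h1 : d x < d w := hd w hw x hpar
        have h2 : d w ≤ d x := hmax w hw
        omega
      have hses := mk_ses (isShortExact_of_cut hSsub)
      have hverts : ({v} : Finset ℕ) ∩ F.verts = {v} :=
        Finset.inter_eq_left.mpr (Finset.singleton_subset_iff.mpr hv)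
      have hone : Iso (F.restrict {v}) oneVertexTree := by
        refine ⟨fun _ => 0, ?_, ?_⟩
        · rw [restrict_verts, hverts]
          refine ⟨fun x _ => ?_, fun a ha b hb _ => ?_, fun y hy => ?_⟩
          · show (0 : ℕ) ∈ (oneVertexTree.verts : Set ℕ)
            simp [oneVertexTree]
          · have ha' : a = v := by simpa using ha
            have hb' : b = v := by simpa using hb
            rw [ha', hb']
          · have hy' : y = 0 := by simpa [oneVertexTree] using hy
            exact ⟨v, by simp, hy'.symm⟩
        · intro x hx
          rw [restrict_verts, hverts] at hx
          have hxv : x = v := Finset.mem_singleton.mp hx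
          have hnone : (F.restrict {v}).parent x = none := by
            rw [restrict_parent]
            cases hp : F.parent x with
            | none => rfl
            | some q =>
              simp only [Option.bind_some, ite_eq_right_iff]
              rintro ⟨-, hq⟩
              have hqv : q = v := Finset.mem_singleton.mp (Finset.mem_inter.mp hq).1
              have hlt : d q < d x := hd x (by rw [hxv]; exact hv) q hp
              have hle : d x ≤ d v := hmax x (by rw [hxv]; exact hv)
              rw [hqv] at hlt
              exact absurd hlt (by omega)
          rw [hnone]
          rfl
      have hquot : (F.quot {v}).verts.card = n - 1 := by
        rw [quot_verts, Finset.card_sdiff_of_subset (Finset.singleton_subset_iff.mpr hv),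
          Finset.card_singleton, hn]
      rw [hses, mk_iso hone, ih (n - 1) (by omega) _ hquot]
      have hn1 : n = n - 1 + 1 := by omega
      conv_rhs => rw [hn1, succ_nsmul]
      exact add_comm _ _

end Forest

open Forest in
/-- The Grothendieck group of `LRF` is isomorphic to `ℤ`, generated
by the class of the one-vertex tree. -/
theorem LRF_grothendieck_group :
    ∃ e : K0 ≃+ ℤ,
      e (QuotientAddGroup.mk (FreeAbelianGroup.of oneVertexTree)) = 1 := by
  classical
  set χ : FreeAbelianGroup Forest →+ ℤ :=
    FreeAbelianGroup.lift (fun F => (F.verts.card : ℤ)) with hχdef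
  have hχof : ∀ F : Forest, χ (FreeAbelianGroup.of F) = (F.verts.card : ℤ) := fun F =>
    FreeAbelianGroup.lift_apply_of _ _
  have hrel : ∀ x ∈ grothendieckRelations, χ x = 0 := by
    rintro x (⟨M, L, N, i, p, hse, rfl⟩ | ⟨M, N, hiso, rfl⟩)
    · rw [map_sub, map_sub, hχof, hχof, hχof, card_of_shortExact hse]
      push_cast
      ring
    · obtain ⟨φ, hφ⟩ := hiso
      rw [map_sub, hχof, hχof, IsoMap.card_eq hφ, sub_self]
  have h0 : AddSubgroup.closure grothendieckRelations ≤ χ.ker :=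
    (AddSubgroup.closure_le _).mpr
      (fun x hx => by simpa [AddMonoidHom.mem_ker] using hrel x hx)
  set e0 : K0 →+ ℤ :=
    QuotientAddGroup.lift _ χ (fun x hx => AddMonoidHom.mem_ker.mp (h0 hx)) with he0def
  have he0 : ∀ x : FreeAbelianGroup Forest, e0 (k0mk x) = χ x := fun x => rfl
  have hgen : e0 (QuotientAddGroup.mk (FreeAbelianGroup.of oneVertexTree)) = 1 := by
    rw [show (QuotientAddGroup.mk (FreeAbelianGroup.of oneVertexTree) : K0)
        = k0mk (FreeAbelianGroup.of oneVertexTree) from rfl, he0, hχof]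
    norm_num [oneVertexTree]
  refine ⟨{ toFun := e0,
            invFun := fun n =>
              n • (QuotientAddGroup.mk (FreeAbelianGroup.of oneVertexTree) : K0),
            left_inv := ?_, right_inv := ?_, map_add' := map_add e0 }, hgen⟩
  · intro x
    refine QuotientAddGroup.induction_on x ?_
    intro z
    simp only
    show e0 (k0mk z) • (k0mk (FreeAbelianGroup.of oneVertexTree)) = k0mk z
    refine FreeAbelianGroup.induction_on z ?_ ?_ ?_ ?_
    · rw [map_zero, map_zero, zero_smul]
    · intro F
      rw [he0, hχof, mk_eq_card F, natCast_zsmul]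
    · intro F hF
      rw [map_neg, map_neg, neg_smul, hF]
    · intro a b ha hb
      rw [map_add, map_add, add_smul, ha, hb]
  · intro n
    simp only
    exact (map_zsmul e0 n (QuotientAddGroup.mk (FreeAbelianGroup.of oneVertexTree) : K0)).trans
      ((congrArg (n • ·) hgen).trans (by rw [smul_eq_mul, mul_one]))
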